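/- Let α ∈ k̄^× with |α|_v < 1. Then for every integer N ≥ 1, Ω_α has a simple zero at t = α^{-q^N}, and these are precisely the zeros of Ω_α. -/

import Mathlib

/- STATEMENT 4: Let α with 0 < |α|_v < 1 (α ∈ k̄^×, viewed inside C_v ≅ K).  The
entire function Ω_α(x) = ∏_{i≥1}(1 - α^{q^i} x) has a simple zero at x = α^{-q^N}
for every N ≥ 1, and these are precisely its zeros. -/

open Filter

namespace OmegaZerosAux

open Finset

variable {K : Type*} [NontriviallyNormedField K] [IsUltrametricDist K]

lemma norm_eq_one_of_close {y : K} (h : ‖y - 1‖ < 1) : ‖y‖ = 1 := by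
  have h1 : ‖y‖ ≤ 1 := by
    have := IsUltrametricDist.norm_add_le_max (y - 1) 1
    simp only [sub_add_cancel, norm_one] at this
    exact this.trans (max_le h.le le_rfl)
  rcases lt_or_ge ‖y‖ 1 with h2 | h2
  · exfalso
    have h3 : ‖(1 : K) - y‖ < 1 := by rwa [norm_sub_rev]
    have h4 := IsUltrametricDist.norm_add_le_max (1 - y) y
    simp only [sub_add_cancel, norm_one] at h4
    exact lt_irrefl _ (h4.trans_lt (max_lt h3 h2))
  · exact le_antisymm h1 h2

/-- Ultrametric: a finite product of terms `1 + c i` with `‖c i‖ ≤ r ≤ 1` is within `r` of 1. -/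
lemma prod_one_add_sub_one_le (s : Finset ℕ) (c : ℕ → K) {r : ℝ}
    (hr0 : 0 ≤ r) (hr1 : r ≤ 1) (h : ∀ i ∈ s, ‖c i‖ ≤ r) :
    ‖(∏ i ∈ s, (1 + c i)) - 1‖ ≤ r := by
  induction s using Finset.cons_induction with
  | empty => simpa using hr0
  | cons a s ha ih =>
    have hca := h a (mem_cons_self a s)
    have ihs := ih fun i hi => h i (mem_cons_of_mem hi)
    have key : (∏ i ∈ cons a s ha, (1 + c i)) - 1
        = (1 + c a) * ((∏ i ∈ s, (1 + c i)) - 1) + c a := by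
      rw [prod_cons]; ring
    rw [key]
    refine (IsUltrametricDist.norm_add_le_max _ _).trans (max_le ?_ hca)
    rw [norm_mul]
    have h1 : ‖1 + c a‖ ≤ 1 :=
      (IsUltrametricDist.norm_add_le_max _ _).trans (max_le (by simp) (hca.trans hr1))
    calc ‖1 + c a‖ * ‖(∏ i ∈ s, (1 + c i)) - 1‖ ≤ 1 * r :=
          mul_le_mul h1 ihs (norm_nonneg _) zero_le_one
      _ = r := one_mul r

/-- Ultrametric Lipschitz-type bound for a difference of products. -/
lemma prod_sub_prod_le (s : Finset ℕ) (f g : ℕ → K) (B : ℕ → ℝ) {ε : ℝ} (hε : 0 ≤ ε)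
    (hB1 : ∀ i ∈ s, 1 ≤ B i) (hf : ∀ i ∈ s, ‖f i‖ ≤ B i) (hg : ∀ i ∈ s, ‖g i‖ ≤ B i)
    (hfg : ∀ i ∈ s, ‖f i - g i‖ ≤ ε) :
    ‖(∏ i ∈ s, f i) - ∏ i ∈ s, g i‖ ≤ ε * ∏ i ∈ s, B i := by
  induction s using Finset.cons_induction with
  | empty => simpa using hε
  | cons a s ha ih =>
    have hBpos : ∀ i ∈ s, (0:ℝ) ≤ B i := fun i hi => zero_le_one.trans (hB1 i (mem_cons_of_mem hi))
    have ihs := ih (fun i hi => hB1 i (mem_cons_of_mem hi)) (fun i hi => hf i (mem_cons_of_mem hi))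
      (fun i hi => hg i (mem_cons_of_mem hi)) (fun i hi => hfg i (mem_cons_of_mem hi))
    have key : (∏ i ∈ cons a s ha, f i) - ∏ i ∈ cons a s ha, g i
        = f a * ((∏ i ∈ s, f i) - ∏ i ∈ s, g i) + (f a - g a) * ∏ i ∈ s, g i := by
      rw [prod_cons, prod_cons]; ring
    rw [key, prod_cons]
    refine (IsUltrametricDist.norm_add_le_max _ _).trans (max_le ?_ ?_)
    · rw [norm_mul]
      calc ‖f a‖ * ‖(∏ i ∈ s, f i) - ∏ i ∈ s, g i‖ ≤ B a * (ε * ∏ i ∈ s, B i) :=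
            mul_le_mul (hf a (mem_cons_self a s)) ihs (norm_nonneg _)
              (zero_le_one.trans (hB1 a (mem_cons_self a s)))
        _ = ε * (B a * ∏ i ∈ s, B i) := by ring
    · rw [norm_mul]
      have h1 : ‖∏ i ∈ s, g i‖ ≤ ∏ i ∈ s, B i := by
        rw [norm_prod]
        exact Finset.prod_le_prod (fun i _ => norm_nonneg _)
          (fun i hi => hg i (mem_cons_of_mem hi))
      calc ‖f a - g a‖ * ‖∏ i ∈ s, g i‖ ≤ ε * ∏ i ∈ s, B i :=
            mul_le_mul (hfg a (mem_cons_self a s)) h1 (norm_nonneg _) hε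
        _ ≤ ε * (B a * ∏ i ∈ s, B i) :=
            mul_le_mul_of_nonneg_left
              (le_mul_of_one_le_left (Finset.prod_nonneg hBpos) (hB1 a (mem_cons_self a s))) hε

lemma one_le_prodR (s : Finset ℕ) (f : ℕ → ℝ) (h : ∀ i ∈ s, 1 ≤ f i) :
    1 ≤ ∏ i ∈ s, f i :=
  calc (1:ℝ) = ∏ _i ∈ s, 1 := by simp
    _ ≤ ∏ i ∈ s, f i := Finset.prod_le_prod (fun _ _ => zero_le_one) h

lemma prod_le_prodR_subset {s t : Finset ℕ} (f : ℕ → ℝ) (hsub : s ⊆ t)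
    (h : ∀ i ∈ t, 1 ≤ f i) : ∏ i ∈ s, f i ≤ ∏ i ∈ t, f i := by
  rw [← Finset.prod_sdiff hsub]
  refine le_mul_of_one_le_left (Finset.prod_nonneg fun i hi => zero_le_one.trans (h i (hsub hi))) ?_
  exact one_le_prodR _ _ fun i hi => h i (Finset.mem_sdiff.mp hi).1

end OmegaZerosAux

open OmegaZerosAux Finset

theorem omega_zeros
    (K : Type*) [NontriviallyNormedField K] [CompleteSpace K] [IsUltrametricDist K]
    (p m q : ℕ) (hp : p.Prime) (hm : 0 < m) (hq : q = p ^ m)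
    (α : K) (hα0 : α ≠ 0) (hα1 : ‖α‖ < 1)
    -- F is the entire function defined by the infinite product Ω_α
    (F : K → K)
    (hF : ∀ x : K, Tendsto (fun N => ∏ i ∈ Finset.range N, (1 - α ^ q ^ (i + 1) * x))
      atTop (nhds (F x))) :
    (∀ N : ℕ, 1 ≤ N →
        F ((α ^ q ^ N)⁻¹) = 0 ∧ deriv F ((α ^ q ^ N)⁻¹) ≠ 0) ∧
      ∀ x : K, F x = 0 → ∃ N : ℕ, 1 ≤ N ∧ x = (α ^ q ^ N)⁻¹ := by
  set a : ℕ → K := fun i => α ^ q ^ (i + 1) with ha_def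
  have hF' : ∀ x : K, Tendsto (fun n => ∏ i ∈ Finset.range n, (1 - a i * x))
      atTop (nhds (F x)) := hF
  have ha0 : ∀ i, a i ≠ 0 := fun i => pow_ne_zero _ hα0
  have hαpos : 0 < ‖α‖ := norm_pos_iff.mpr hα0
  have hq2 : 1 < q := by
    rw [hq]; exact Nat.one_lt_pow hm.ne' hp.one_lt
  have hai_le : ∀ i, ‖a i‖ ≤ ‖α‖ ^ (i + 1) := by
    intro i
    show ‖α ^ q ^ (i + 1)‖ ≤ _
    rw [norm_pow]
    exact pow_le_pow_of_le_one (norm_nonneg α) hα1.le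
      (Nat.le_of_lt (Nat.lt_pow_self hq2))
  have hai1 : ∀ i, ‖a i‖ ≤ 1 := fun i =>
    (hai_le i).trans (pow_le_one₀ (norm_nonneg α) hα1.le)
  -- norms of the `a i` are pairwise distinct
  have hdist : ∀ i j : ℕ, i ≠ j → ‖a i‖ ≠ ‖a j‖ := by
    intro i j hij
    have hne : q ^ (i + 1) ≠ q ^ (j + 1) := fun h =>
      hij (by simpa using Nat.pow_right_injective hq2 h)
    show ‖α ^ q ^ (i+1)‖ ≠ ‖α ^ q ^ (j+1)‖
    rw [norm_pow, norm_pow]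
    rcases lt_or_gt_of_ne hne with h | h
    · exact ne_of_gt (pow_lt_pow_right_of_lt_one₀ hαpos hα1 h)
    · exact ne_of_lt (pow_lt_pow_right_of_lt_one₀ hαpos hα1 h)
  -- tails go to zero
  have htail : ∀ R : ℝ, 0 ≤ R → ∀ ε : ℝ, 0 < ε → ∃ M : ℕ, ∀ i, M ≤ i → ‖a i‖ * R < ε := by
    intro R hR ε hε
    have h1 : Tendsto (fun i : ℕ => ‖α‖ ^ (i + 1) * R) atTop (nhds (0 * R)) :=
      ((tendsto_pow_atTop_nhds_zero_of_lt_one (norm_nonneg α) hα1).comp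
        (tendsto_add_atTop_nat 1)).mul_const R
    rw [zero_mul] at h1
    obtain ⟨M, hM⟩ := (h1.eventually (eventually_lt_nhds hε)).exists_forall_of_atTop
    exact ⟨M, fun i hi => lt_of_le_of_lt
      (mul_le_mul_of_nonneg_right (hai_le i) hR) (hM i hi)⟩
  -- products over Ico intervals are close to 1 when the tail is small
  have hIco : ∀ (x : K) (M n : ℕ) (r : ℝ), 0 ≤ r → r ≤ 1 →
      (∀ i, M ≤ i → ‖a i * x‖ ≤ r) →
      ‖(∏ i ∈ Finset.Ico M n, (1 - a i * x)) - 1‖ ≤ r := by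
    intro x M n r hr0 hr1 h
    have := prod_one_add_sub_one_le (Finset.Ico M n) (fun i => -(a i * x)) hr0 hr1
      (fun i hi => by simpa using h i (Finset.mem_Ico.mp hi).1)
    simpa [sub_eq_add_neg] using this
  -- norm stability of partial products: if the tail beyond M is small then
  -- ‖F x‖ equals the norm of the M-th partial product.
  have hstab : ∀ (x : K) (M : ℕ), (∀ i, M ≤ i → ‖a i * x‖ ≤ 1/2) →
      ‖F x‖ = ‖∏ i ∈ Finset.range M, (1 - a i * x)‖ := by
    intro x M hM
    have hconst : ∀ n, M ≤ n →
        ‖∏ i ∈ Finset.range n, (1 - a i * x)‖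
          = ‖∏ i ∈ Finset.range M, (1 - a i * x)‖ := by
      intro n hn
      rw [← Finset.prod_range_mul_prod_Ico _ hn, norm_mul]
      have h1 : ‖(∏ i ∈ Finset.Ico M n, (1 - a i * x)) - 1‖ ≤ 1/2 :=
        hIco x M n (1/2) (by norm_num) (by norm_num) hM
      rw [norm_eq_one_of_close (h1.trans_lt (by norm_num)), mul_one]
    have h2 : Tendsto (fun n => ‖∏ i ∈ Finset.range n, (1 - a i * x)‖) atTop (nhds ‖F x‖) :=
      (hF' x).norm
    have h3 : Tendsto (fun n => ‖∏ i ∈ Finset.range n, (1 - a i * x)‖) atTop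
        (nhds ‖∏ i ∈ Finset.range M, (1 - a i * x)‖) := by
      refine Tendsto.congr' ?_ tendsto_const_nhds
      filter_upwards [eventually_ge_atTop M] with n hn
      exact (hconst n hn).symm
    exact tendsto_nhds_unique h2 h3
  -- Part 2: the only zeros are the stated ones
  have part2 : ∀ x : K, F x = 0 → ∃ N : ℕ, 1 ≤ N ∧ x = (α ^ q ^ N)⁻¹ := by
    intro x hx
    by_contra hcon
    push_neg at hcon
    have hfac : ∀ i : ℕ, (1 : K) - a i * x ≠ 0 := by
      intro i h
      have h1 : a i * x = 1 := by linear_combination -h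
      have h2 : x = (a i)⁻¹ := eq_inv_of_mul_eq_one_right h1
      exact hcon (i + 1) (Nat.le_add_left 1 i) h2
    obtain ⟨M, hM⟩ := htail ‖x‖ (norm_nonneg x) (1/2) (by norm_num)
    have h0 := hstab x M (fun i hi => by
      rw [norm_mul]; exact (hM i hi).le)
    rw [hx, norm_zero] at h0
    have h1 : (∏ i ∈ Finset.range M, (1 - a i * x)) ≠ 0 :=
      Finset.prod_ne_zero_iff.mpr fun i _ => hfac i
    exact h1 (norm_eq_zero.mp h0.symm)
  refine ⟨?_, part2⟩
  -- Part 1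
  intro N hN
  obtain ⟨j, rfl⟩ : ∃ j, N = j + 1 := ⟨N - 1, (Nat.succ_pred_eq_of_pos hN).symm⟩
  show F ((a j)⁻¹) = 0 ∧ deriv F ((a j)⁻¹) ≠ 0
  set x0 : K := (a j)⁻¹ with hx0_def
  have hx0ne : x0 ≠ 0 := inv_ne_zero (ha0 j)
  have hajx0 : a j * x0 = 1 := mul_inv_cancel₀ (ha0 j)
  -- F vanishes at x0
  have hzero : F x0 = 0 := by
    have hev : (fun n => ∏ i ∈ Finset.range n, (1 - a i * x0)) =ᶠ[atTop] fun _ => (0 : K) := by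
      filter_upwards [eventually_ge_atTop (j + 1)] with n hn
      exact Finset.prod_eq_zero (Finset.mem_range.mpr hn) (by rw [hajx0, sub_self])
    exact tendsto_nhds_unique (hF' x0) (Tendsto.congr' hev.symm tendsto_const_nhds)
  refine ⟨hzero, ?_⟩
  -- setup for the derivative
  set R : ℝ := ‖x0‖ with hR_def
  have hR0 : 0 < R := norm_pos_iff.mpr hx0ne
  obtain ⟨M0, hM0⟩ := htail R hR0.le (1/2) (by norm_num)
  set M : ℕ := max M0 (j + 1) with hM_def
  have hMtail : ∀ i, M ≤ i → ‖a i‖ * R < 1/2 :=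
    fun i hi => hM0 i ((le_max_left _ _).trans hi)
  have hjM : j < M := lt_of_lt_of_le (Nat.lt_succ_self j) (le_max_right _ _)
  set B : ℕ → ℝ := fun i => max 1 (‖a i‖ * R) with hB_def
  have hB1 : ∀ i, 1 ≤ B i := fun i => le_max_left _ _
  have hB0 : ∀ i, 0 ≤ B i := fun i => zero_le_one.trans (hB1 i)
  set C0 : ℝ := ∏ i ∈ Finset.range M, B i with hC0_def
  have hC0_1 : 1 ≤ C0 := by
    rw [hC0_def]; exact one_le_prodR _ _ fun i _ => hB1 i
  have hC0_0 : 0 < C0 := lt_of_lt_of_le one_pos hC0_1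
  -- bound on the products of B over any erased range
  have hBprod : ∀ n : ℕ, ∏ i ∈ (Finset.range n).erase j, B i ≤ C0 := by
    intro n
    have h1 : ∏ i ∈ (Finset.range n).erase j, B i ≤ ∏ i ∈ Finset.range (max n M), B i := by
      refine prod_le_prodR_subset B ?_ (fun i _ => hB1 i)
      exact (Finset.erase_subset _ _).trans
        (Finset.range_subset_range.mpr (le_max_left _ _))
    have h2 : ∏ i ∈ Finset.range (max n M), B i = C0 := by
      rw [hC0_def]
      refine (Finset.prod_subset (Finset.range_subset_range.mpr (le_max_right _ _)) ?_).symm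
      intro i hi hni
      have hMi : M ≤ i := le_of_not_gt fun h => hni (Finset.mem_range.mpr h)
      exact max_eq_left ((hMtail i hMi).le.trans (by norm_num))
    rw [h2] at h1
    exact h1
  -- the partial products with the j-th factor removed
  set Q : ℕ → K → K := fun n x => ∏ i ∈ (Finset.range n).erase j, (1 - a i * x) with hQ_def
  have hsplit : ∀ (x : K) (n : ℕ), j < n →
      (∏ i ∈ Finset.range n, (1 - a i * x)) = (1 - a j * x) * Q n x :=
    fun x n hn => (Finset.mul_prod_erase _ _ (Finset.mem_range.mpr hn)).symm
  have hfactor : ∀ x : K, (1 : K) - a j * x = -(a j) * (x - x0) := by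
    intro x
    linear_combination -hajx0
  -- factors bounded on the ball of radius R around x0 (which contains 0, so ‖x‖ ≤ R there)
  have hxB : ∀ x : K, ‖x‖ ≤ R → ∀ i, ‖1 - a i * x‖ ≤ B i := by
    intro x hx i
    have h1 : ‖(1:K) - a i * x‖ ≤ max ‖(1:K)‖ ‖a i * x‖ := by
      rw [sub_eq_add_neg]
      simpa using IsUltrametricDist.norm_add_le_max (1:K) (-(a i * x))
    rw [norm_one, norm_mul] at h1
    exact h1.trans (max_le_max le_rfl
      (mul_le_mul_of_nonneg_left hx (norm_nonneg _)))
  -- Lipschitz bound for Q n between x and x0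
  have hQbound : ∀ x : K, ‖x - x0‖ ≤ R → ∀ n, ‖Q n x - Q n x0‖ ≤ ‖x - x0‖ * C0 := by
    intro x hx n
    have hxR : ‖x‖ ≤ R := by
      have h1 : ‖x‖ = ‖(x - x0) + x0‖ := by ring_nf
      rw [h1]
      exact (IsUltrametricDist.norm_add_le_max _ _).trans (max_le hx le_rfl)
    have hx0R : ‖x0‖ ≤ R := le_of_eq rfl
    have := prod_sub_prod_le ((Finset.range n).erase j)
      (fun i => 1 - a i * x) (fun i => 1 - a i * x0) B (norm_nonneg (x - x0))
      (fun i _ => hB1 i) (fun i _ => hxB x hxR i) (fun i _ => hxB x0 hx0R i)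
      (fun i _ => by
        have h1 : (1 - a i * x) - (1 - a i * x0) = a i * (x0 - x) := by ring
        rw [h1, norm_mul, norm_sub_rev]
        calc ‖a i‖ * ‖x - x0‖ ≤ 1 * ‖x - x0‖ :=
              mul_le_mul_of_nonneg_right (hai1 i) (norm_nonneg _)
          _ = ‖x - x0‖ := one_mul _)
    exact this.trans (mul_le_mul_of_nonneg_left (hBprod n) (norm_nonneg _))
  -- split Q between levels: for j < n₁ ≤ n₂
  have hQsplit : ∀ (x : K) (n₁ n₂ : ℕ), j < n₁ → n₁ ≤ n₂ →
      Q n₂ x = Q n₁ x * ∏ i ∈ Finset.Ico n₁ n₂, (1 - a i * x) := by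
    intro x n₁ n₂ hj hn
    rw [hQ_def]
    simp only []
    rw [← Finset.prod_union]
    · congr 1
      ext i
      simp only [Finset.mem_erase, Finset.mem_range, Finset.mem_union, Finset.mem_Ico]
      omega
    · rw [Finset.disjoint_left]
      intro i hi hi2
      rw [Finset.mem_erase, Finset.mem_range] at hi
      rw [Finset.mem_Ico] at hi2
      omega
  -- norm bound for Q n x0
  have hQnorm : ∀ n, ‖Q n x0‖ ≤ C0 := by
    intro n
    rw [hQ_def]
    simp only []
    rw [norm_prod]
    calc ∏ i ∈ (Finset.range n).erase j, ‖1 - a i * x0‖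
        ≤ ∏ i ∈ (Finset.range n).erase j, B i :=
          Finset.prod_le_prod (fun i _ => norm_nonneg _)
            (fun i _ => hxB x0 le_rfl i)
      _ ≤ C0 := hBprod n
  -- Q n x0 is Cauchy
  have hQcauchy : CauchySeq (fun n => Q n x0) := by
    rw [Metric.cauchySeq_iff']
    intro ε hε
    have hε' : 0 < min (ε / (C0 + 1)) (1/2) := by
      refine lt_min (div_pos hε (by linarith)) (by norm_num)
    obtain ⟨M1, hM1⟩ := htail R hR0.le _ hε'
    refine ⟨max M1 (j + 1), fun n hn => ?_⟩
    set N1 := max M1 (j + 1)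
    have hjN1 : j < N1 := lt_of_lt_of_le (Nat.lt_succ_self j) (le_max_right _ _)
    rw [dist_eq_norm]
    have h1 := hQsplit x0 N1 n hjN1 hn
    have h2 : Q n x0 - Q N1 x0 = Q N1 x0 * ((∏ i ∈ Finset.Ico N1 n, (1 - a i * x0)) - 1) := by
      rw [h1]; ring
    rw [h2, norm_mul]
    have h3 : ‖(∏ i ∈ Finset.Ico N1 n, (1 - a i * x0)) - 1‖ ≤ min (ε / (C0 + 1)) (1/2) := by
      refine hIco x0 N1 n _ hε'.le ((min_le_right _ _).trans (by norm_num)) ?_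
      intro i hi
      rw [norm_mul]
      exact (hM1 i ((le_max_left _ _).trans hi)).le
    calc ‖Q N1 x0‖ * ‖(∏ i ∈ Finset.Ico N1 n, (1 - a i * x0)) - 1‖
        ≤ C0 * (ε / (C0 + 1)) :=
          mul_le_mul (hQnorm N1) (h3.trans (min_le_left _ _)) (norm_nonneg _) hC0_0.le
      _ < ε := by
          rw [div_eq_inv_mul, ← mul_assoc]
          have : C0 * (C0 + 1)⁻¹ < 1 := by
            rw [mul_inv_lt_iff₀ (by linarith)]
            linarith
          nlinarith
  obtain ⟨L, hL⟩ := cauchySeq_tendsto_of_complete hQcauchy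
  -- L is nonzero
  have hLnorm : ‖L‖ = ‖Q M x0‖ := by
    have hconst : ∀ n, M ≤ n → ‖Q n x0‖ = ‖Q M x0‖ := by
      intro n hn
      rw [hQsplit x0 M n hjM hn, norm_mul]
      have h1 : ‖(∏ i ∈ Finset.Ico M n, (1 - a i * x0)) - 1‖ ≤ 1/2 := by
        refine hIco x0 M n (1/2) (by norm_num) (by norm_num) ?_
        intro i hi
        rw [norm_mul]
        exact (hMtail i hi).le
      rw [norm_eq_one_of_close (h1.trans_lt (by norm_num)), mul_one]
    refine tendsto_nhds_unique hL.norm ?_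
    refine Tendsto.congr' ?_ tendsto_const_nhds
    filter_upwards [eventually_ge_atTop M] with n hn
    exact (hconst n hn).symm
  have hQM0 : Q M x0 ≠ 0 := by
    rw [hQ_def]
    simp only []
    refine Finset.prod_ne_zero_iff.mpr fun i hi => ?_
    have hij : i ≠ j := (Finset.mem_erase.mp hi).1
    intro h
    have h1 : a i * x0 = 1 := by linear_combination -h
    have h2 : ‖a i‖ * ‖x0‖ = 1 := by rw [← norm_mul, h1, norm_one]
    have h3 : ‖a j‖ * ‖x0‖ = 1 := by rw [← norm_mul, hajx0, norm_one]
    have h4 : ‖a i‖ = ‖a j‖ := by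
      have hx0pos : 0 < ‖x0‖ := norm_pos_iff.mpr hx0ne
      field_simp at h2 h3
      nlinarith
    exact hdist i j hij h4
  have hL0 : L ≠ 0 := by
    intro h
    rw [h, norm_zero] at hLnorm
    exact hQM0 (norm_eq_zero.mp hLnorm.symm)
  -- the derivative
  set c : K := -(a j) * L with hc_def
  have hc0 : c ≠ 0 := mul_ne_zero (neg_ne_zero.mpr (ha0 j)) hL0
  -- key pointwise estimate
  have hEst : ∀ x : K, ‖x - x0‖ ≤ R →
      ‖F x - (x - x0) * c‖ ≤ (‖a j‖ * C0) * ‖x - x0‖ ^ 2 := by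
    intro x hx
    rcases eq_or_ne x x0 with rfl | hxne
    · simp [hzero]
    · set d : K := -(a j) * (x - x0) with hd_def
      have hd0 : d ≠ 0 :=
        mul_ne_zero (neg_ne_zero.mpr (ha0 j)) (sub_ne_zero.mpr hxne)
      -- the partial products equal d * Q n x eventually
      have hPn : ∀ n, j < n →
          (∏ i ∈ Finset.range n, (1 - a i * x)) = d * Q n x := by
        intro n hn
        rw [hsplit x n hn, hfactor x]
      -- hence Q n x converges to d⁻¹ * F x
      have hQx : Tendsto (fun n => Q n x) atTop (nhds (d⁻¹ * F x)) := by
        have h1 : Tendsto (fun n => d⁻¹ * ∏ i ∈ Finset.range n, (1 - a i * x)) atTop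
            (nhds (d⁻¹ * F x)) := (hF' x).const_mul _
        refine Tendsto.congr' ?_ h1
        filter_upwards [eventually_gt_atTop j] with n hn
        rw [hPn n hn, ← mul_assoc, inv_mul_cancel₀ hd0, one_mul]
      -- pass to the limit in the Lipschitz bound
      have hHL : ‖d⁻¹ * F x - L‖ ≤ ‖x - x0‖ * C0 := by
        have h1 : Tendsto (fun n => ‖Q n x - Q n x0‖) atTop (nhds ‖d⁻¹ * F x - L‖) :=
          (hQx.sub hL).norm
        exact le_of_tendsto h1 (Eventually.of_forall fun n => hQbound x hx n)
      have hFx : F x = d * (d⁻¹ * F x) := by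
        rw [← mul_assoc, mul_inv_cancel₀ hd0, one_mul]
      have h2 : F x - (x - x0) * c = d * (d⁻¹ * F x - L) := by
        rw [mul_sub, ← hFx, hc_def, hd_def]
        ring
      rw [h2, norm_mul, hd_def, norm_mul, norm_neg]
      calc ‖a j‖ * ‖x - x0‖ * ‖d⁻¹ * F x - L‖
          ≤ ‖a j‖ * ‖x - x0‖ * (‖x - x0‖ * C0) := by
            refine mul_le_mul_of_nonneg_left hHL ?_
            positivity
        _ = (‖a j‖ * C0) * ‖x - x0‖ ^ 2 := by ring
  have hder : HasDerivAt F c x0 := by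
    rw [hasDerivAt_iff_isLittleO]
    rw [Asymptotics.isLittleO_iff]
    intro ε hε
    have hden : 0 < ‖a j‖ * C0 + 1 := by positivity
    have hδ : 0 < min R (ε / (‖a j‖ * C0 + 1)) := lt_min hR0 (div_pos hε hden)
    rw [Metric.eventually_nhds_iff]
    refine ⟨min R (ε / (‖a j‖ * C0 + 1)), hδ, fun x hx => ?_⟩
    rw [dist_eq_norm] at hx
    have hx1 : ‖x - x0‖ ≤ R := (hx.le.trans (min_le_left _ _))
    have hx2 : ‖x - x0‖ ≤ ε / (‖a j‖ * C0 + 1) := hx.le.trans (min_le_right _ _)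
    have h1 := hEst x hx1
    rw [hzero, sub_zero, smul_eq_mul]
    have h2 : (‖a j‖ * C0) * ‖x - x0‖ ^ 2 ≤ ε * ‖x - x0‖ := by
      have h3 : (‖a j‖ * C0) * ‖x - x0‖ ≤ ε := by
        calc (‖a j‖ * C0) * ‖x - x0‖ ≤ (‖a j‖ * C0) * (ε / (‖a j‖ * C0 + 1)) := by
              refine mul_le_mul_of_nonneg_left hx2 ?_
              positivity
          _ ≤ ε := by
              rw [mul_div_assoc']
              rw [div_le_iff₀ hden]
              nlinarith [norm_nonneg (a j), hC0_0]
      calc (‖a j‖ * C0) * ‖x - x0‖ ^ 2 = ((‖a j‖ * C0) * ‖x - x0‖) * ‖x - x0‖ := by ring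
        _ ≤ ε * ‖x - x0‖ := mul_le_mul_of_nonneg_right h3 (norm_nonneg _)
    calc ‖F x - (x - x0) * c‖ ≤ (‖a j‖ * C0) * ‖x - x0‖ ^ 2 := h1
      _ ≤ ε * ‖x - x0‖ := h2
  rw [hder.deriv]
  exact hc0
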